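/- In a locally finite poset, if a directed set S has a supremum m = ⊔S with m ∉ S, then one derives a contradiction; equivalently, every directed set with a supremum contains its supremum as a maximal element of S. -/

import Mathlib

def DirectedSetLe {P : Type*} [PartialOrder P] (S : Set P) : Prop :=
  S.Nonempty ∧ ∀ s ∈ S, ∀ s' ∈ S, ∃ t ∈ S, s ≤ t ∧ s' ≤ t

/-- In a locally finite poset, a directed set with a supremum cannot omit its
supremum; equivalently it contains the supremum as a maximal element. -/
theorem directed_sup_mem_locallyFinite {P : Type*} [PartialOrder P]
    (hlf : ∀ x y : P, (Set.Icc x y).Finite)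
    (S : Set P) (hS : DirectedSetLe S) (m : P) (hm : IsLUB S m) :
    (m ∉ S → False) ∧ (m ∈ S ∧ ∀ s ∈ S, m ≤ s → s = m) := by
  obtain ⟨⟨s₀, hs₀⟩, hdir⟩ := hS
  have hub : ∀ s ∈ S, s ≤ m := fun s hs => hm.1 hs
  -- consider T = S ∩ Icc s₀ m, a finite nonempty directed set
  set T : Set P := S ∩ Set.Icc s₀ m with hT
  have hTfin : T.Finite := (hlf s₀ m).subset (Set.inter_subset_right)
  have hTne : T.Nonempty := ⟨s₀, hs₀, le_refl _, hub s₀ hs₀⟩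
  -- T has a maximal element
  obtain ⟨t, htT, htmax⟩ : ∃ t ∈ T, ∀ u ∈ T, id t ≤ id u → t = u := by
    obtain ⟨t, htT, h⟩ := Set.Finite.exists_maximalFor id T hTfin hTne
    exact ⟨t, htT, fun u hu htu => le_antisymm htu (h hu htu)⟩
  -- t is in fact an upper bound of T, hence of S
  have hubS : ∀ s ∈ S, s ≤ t := by
    intro s hs
    obtain ⟨u, huS, htu, hsu⟩ := hdir t htT.1 s hs
    have huT : u ∈ T := ⟨huS, le_trans htT.2.1 htu, hub u huS⟩
    have : t = u := htmax u huT htu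
    exact this ▸ hsu
  have hmt : m ≤ t := hm.2 hubS
  have : m = t := le_antisymm hmt (hub t htT.1)
  have hmS : m ∈ S := this ▸ htT.1
  exact ⟨fun h => h hmS, hmS, fun s hs hms => le_antisymm (hub s hs) hms⟩
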